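/- Let q = 2^s with s ≥ 1, and let d̃_{1,2} be the first Dickson invariant of GL_2(F_q) acting on F_q[x_1,x_2], so d̃_{1,2} = x_1^{q(q-1)} + N(x_2)^{q-1} with N(x_2) = x_2^q + x_2 x_1^{q-1}. Then the sum of the non-square terms of d̃_{1,2} equals ũ_2^{q-2} x_1 x_2, where ũ_2 = x_1 N(x_2) = x_1 x_2^q + x_2 x_1^q. -/
import Mathlib


open MvPolynomial
open scoped Classical

/-- `ns F`: the sum of the non-square terms of a polynomial, i.e. the terms
whose monomial has some odd exponent (over a field of characteristic 2 where
every scalar is a square, a term is a square iff its monomial is a square). -/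
noncomputable def nsPart {σ : Type*} {F : Type*} [Field F] (p : MvPolynomial σ F) :
    MvPolynomial σ F :=
  ∑ d ∈ p.support.filter (fun d => ¬ ∀ i, Even (d i)),
    MvPolynomial.monomial d (p.coeff d)

/-- exponent vector for `x_1^a x_2^b` -/
noncomputable def Evec (a b : ℕ) : Fin 2 →₀ ℕ :=
  Finsupp.single 0 a + Finsupp.single 1 b

@[simp] lemma Evec_apply0 (a b : ℕ) : Evec a b 0 = a := by
  simp [Evec, Finsupp.single_apply]

@[simp] lemma Evec_apply1 (a b : ℕ) : Evec a b 1 = b := by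
  simp [Evec, Finsupp.single_apply]

lemma X_pow_mul_X_pow {F : Type*} [Field F] (a b : ℕ) :
    (X 0 : MvPolynomial (Fin 2) F) ^ a * X 1 ^ b = monomial (Evec a b) 1 := by
  rw [X_pow_eq_monomial, X_pow_eq_monomial, monomial_mul, one_mul, Evec]

lemma nsPart_sum_monomial {σ ι F : Type*} [Field F] (S : Finset ι) (f : ι → (σ →₀ ℕ))
    (hf : Set.InjOn f S) :
    nsPart (∑ i ∈ S, monomial (f i) (1 : F)) =
      ∑ i ∈ S.filter (fun i => ¬ ∀ j, Even (f i j)), monomial (f i) (1 : F) := by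
  set p : MvPolynomial σ F := ∑ i ∈ S, monomial (f i) (1 : F) with hp
  have hc : ∀ i ∈ S, p.coeff (f i) = 1 := by
    intro i hi
    rw [hp, MvPolynomial.coeff_sum, Finset.sum_eq_single i]
    · simp [coeff_monomial]
    · intro j hj hne
      rw [coeff_monomial, if_neg]
      exact fun h => hne (hf hj hi h)
    · intro h; exact absurd hi h
  have hsupp : p.support = S.image f := by
    ext d
    simp only [Finset.mem_image, mem_support_iff]
    constructor
    · intro hd
      by_contra hcon
      push_neg at hcon
      apply hd
      rw [hp, MvPolynomial.coeff_sum]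
      exact Finset.sum_eq_zero fun i hi => by
        rw [coeff_monomial, if_neg (hcon i hi)]
    · rintro ⟨i, hi, rfl⟩
      rw [hc i hi]; exact one_ne_zero
  rw [nsPart, hsupp, Finset.filter_image, Finset.sum_image]
  · exact Finset.sum_congr rfl fun i hi =>
      by rw [hc i (Finset.mem_filter.mp hi).1]
  · intro a ha b hb hab
    exact hf (Finset.mem_of_mem_filter a ha) (Finset.mem_of_mem_filter b hb) hab

lemma geom_aux {R : Type*} [CommRing R] [IsDomain R] [CharP R 2]
    (x y : R) (hx : x + y ≠ 0) (n : ℕ)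
    (h : (x + y) ^ (n + 1) = x ^ (n + 1) + y ^ (n + 1)) :
    (x + y) ^ n = ∑ k ∈ Finset.range (n + 1), x ^ k * y ^ (n - k) := by
  apply mul_right_cancel₀ hx
  rw [← pow_succ, h]
  have hg := geom_sum₂_mul x y (n + 1)
  rw [CharTwo.sub_eq_add, CharTwo.sub_eq_add] at hg
  rw [← hg]
  norm_num

theorem stmt_6 {F : Type*} [Field F] [Fintype F] (s q : ℕ) (hs : 1 ≤ s)
    (hq : q = 2 ^ s) (hF : Fintype.card F = q) :
    nsPart ((X 0 : MvPolynomial (Fin 2) F) ^ (q * (q - 1))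
        + (X 1 ^ q + X 1 * X 0 ^ (q - 1)) ^ (q - 1)) =
      ((X 0 : MvPolynomial (Fin 2) F) * X 1 ^ q + X 1 * X 0 ^ q) ^ (q - 2)
        * (X 0 * X 1) := by
  -- basic numerics
  have hq2 : 2 ≤ q := by rw [hq]; calc 2 = 2 ^ 1 := rfl
                                      _ ≤ 2 ^ s := Nat.pow_le_pow_right (by norm_num) hs
  have hqe : Even q := by
    rw [hq]; exact (Nat.even_pow).mpr ⟨even_two, by omega⟩
  obtain ⟨t, ht⟩ := id hqe
  -- characteristic 2
  haveI hch : CharP F 2 := by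
    haveI := ringChar.charP F
    obtain ⟨n, hpr, hcard⟩ := FiniteField.card F (ringChar F)
    have h2 : ringChar F = 2 := by
      have hdvd : ringChar F ∣ 2 ^ s := by
        rw [← hq, ← hF, hcard]
        exact dvd_pow_self _ n.2.ne'
      exact (Nat.prime_dvd_prime_iff_eq hpr Nat.prime_two).mp (hpr.dvd_of_dvd_pow hdvd)
    exact h2 ▸ ringChar.charP F
  set R := MvPolynomial (Fin 2) F
  haveI : CharP R 2 := inferInstance
  haveI : Fact (Nat.Prime 2) := ⟨Nat.prime_two⟩
  set A : R := X 0 ^ (q - 1) with hA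
  set B : R := X 1 ^ (q - 1) with hB
  have hAB : A + B ≠ 0 := by
    intro h
    have h1 := congrArg (MvPolynomial.eval (fun i : Fin 2 => if i = 0 then (1 : F) else 0)) h
    rw [hA, hB] at h1
    simp [zero_pow (by omega : q - 1 ≠ 0), (by decide : (1 : Fin 2) ≠ 0)] at h1
  have frob : (A + B) ^ q = A ^ q + B ^ q := by
    rw [hq]; exact add_pow_char_pow ..
  have geom1 : (A + B) ^ (q - 1) = ∑ k ∈ Finset.range q, A ^ k * B ^ (q - 1 - k) := by
    have := geom_aux A B hAB (q - 1) (by rw [(by omega : q - 1 + 1 = q)]; exact frob)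
    rwa [(by omega : q - 1 + 1 = q)] at this
  have geom2 : (A + B) ^ (q - 2) = ∑ j ∈ Finset.range (q / 2), A ^ (2 * j) * B ^ (q - 2 - 2 * j) := by
    have hsq : (A + B) ^ 2 = A ^ 2 + B ^ 2 := CharTwo.add_sq A B
    have hne : A ^ 2 + B ^ 2 ≠ 0 := by rw [← hsq]; exact pow_ne_zero _ hAB
    have e1 : q / 2 - 1 + 1 = q / 2 := by omega
    have e2 : 2 * (q / 2) = q := by omega
    have hh : (A ^ 2 + B ^ 2) ^ (q / 2 - 1 + 1) = (A ^ 2) ^ (q / 2 - 1 + 1) + (B ^ 2) ^ (q / 2 - 1 + 1) := by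
      rw [e1, ← hsq, ← pow_mul (A + B) 2 (q / 2), ← pow_mul A 2 (q / 2), ← pow_mul B 2 (q / 2), e2]
      exact frob
    have hgeo := geom_aux (A ^ 2) (B ^ 2) hne (q / 2 - 1) hh
    rw [← hsq, ← pow_mul (A + B) 2 (q / 2 - 1), (by omega : 2 * (q / 2 - 1) = q - 2)] at hgeo
    rw [hgeo, e1]
    refine Finset.sum_congr rfl fun j hj => ?_
    have hj' : j < q / 2 := Finset.mem_range.mp hj
    rw [← pow_mul A 2 j, ← pow_mul B 2 (q / 2 - 1 - j), (by omega : 2 * (q / 2 - 1 - j) = q - 2 - 2 * j)]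
  -- the exponent function
  set f : ℕ → (Fin 2 →₀ ℕ) := fun k => Evec ((q - 1) * k) ((q - 1) * (q - k)) with hfdef
  -- LHS as a sum of monomials
  have hd : (X 0 : R) ^ (q * (q - 1)) + (X 1 ^ q + X 1 * X 0 ^ (q - 1)) ^ (q - 1)
      = ∑ k ∈ Finset.range (q + 1), monomial (f k) (1 : F) := by
    have hx1 : (X 1 : R) ^ q = X 1 ^ (q - 1) * X 1 := by
      conv_lhs => rw [(by omega : q = q - 1 + 1)]
      rw [pow_succ]
    have h1 : (X 1 : R) ^ q + X 1 * X 0 ^ (q - 1) = X 1 * (A + B) := by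
      rw [hA, hB, hx1, mul_add]
      ring
    rw [h1, mul_pow, geom1, Finset.mul_sum, Finset.sum_range_succ]
    have h2 : ∀ k ∈ Finset.range q,
        (X 1 : R) ^ (q - 1) * (A ^ k * B ^ (q - 1 - k)) = monomial (f k) (1 : F) := by
      intro k hk
      have hk' : k < q := Finset.mem_range.mp hk
      rw [hA, hB, ← pow_mul (X 1) (q - 1) (q - 1 - k), ← pow_mul (X 0) (q - 1) k, hfdef,
        ← X_pow_mul_X_pow, (by omega : q - k = q - 1 - k + 1), Nat.mul_add, Nat.mul_one, pow_add]
      ring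
    rw [Finset.sum_congr rfl h2]
    have h3 : (X 0 : R) ^ (q * (q - 1)) = monomial (f q) (1 : F) := by
      rw [hfdef, ← X_pow_mul_X_pow, Nat.sub_self, Nat.mul_zero, pow_zero, mul_one, mul_comm q]
    rw [h3]
    ring
  -- RHS as a sum of monomials
  have hr : ((X 0 : R) * X 1 ^ q + X 1 * X 0 ^ q) ^ (q - 2) * (X 0 * X 1)
      = ∑ j ∈ Finset.range (q / 2), monomial (f (2 * j + 1)) (1 : F) := by
    have hx1 : (X 1 : R) ^ q = X 1 ^ (q - 1) * X 1 := by
      conv_lhs => rw [(by omega : q = q - 1 + 1)]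
      rw [pow_succ]
    have hx0 : (X 0 : R) ^ q = X 0 ^ (q - 1) * X 0 := by
      conv_lhs => rw [(by omega : q = q - 1 + 1)]
      rw [pow_succ]
    have h1 : (X 0 : R) * X 1 ^ q + X 1 * X 0 ^ q = X 0 * X 1 * (A + B) := by
      rw [hA, hB, hx0, hx1, mul_add]
      ring
    rw [h1, mul_pow, geom2, Finset.mul_sum, Finset.sum_mul]
    refine Finset.sum_congr rfl fun j hj => ?_
    have hj' : j < q / 2 := Finset.mem_range.mp hj
    have hy0 : (X 0 : R) ^ (q - 1) = X 0 ^ (q - 2) * X 0 := by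
      conv_lhs => rw [(by omega : q - 1 = q - 2 + 1)]
      rw [pow_succ]
    have hy1 : (X 1 : R) ^ (q - 1) = X 1 ^ (q - 2) * X 1 := by
      conv_lhs => rw [(by omega : q - 1 = q - 2 + 1)]
      rw [pow_succ]
    rw [hA, hB, ← pow_mul (X 0) (q - 1) (2 * j), ← pow_mul (X 1) (q - 1) (q - 2 - 2 * j), hfdef,
      ← X_pow_mul_X_pow, (by omega : q - (2 * j + 1) = q - 2 - 2 * j + 1), Nat.mul_add,
      Nat.mul_add, Nat.mul_one, pow_add, pow_add, hy0, hy1, mul_pow]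
    ring
  -- injectivity
  have hinj : Set.InjOn f (Finset.range (q + 1)) := by
    intro a ha b hb hab
    simp only [Finset.coe_range, Set.mem_Iio] at ha hb
    have := congrArg (fun g => g 1) hab
    simp only [hfdef, Evec_apply1] at this
    have := Nat.eq_of_mul_eq_mul_left (by omega : 0 < q - 1) this
    omega
  rw [hd, nsPart_sum_monomial _ _ hinj, hr]
  refine Finset.sum_nbij' (fun k => k / 2) (fun j => 2 * j + 1) ?_ ?_ ?_ ?_ ?_
  · intro k hk
    simp only [Finset.mem_filter, Finset.mem_range, hfdef, Fin.forall_fin_two,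
      Evec_apply0, Evec_apply1, Nat.even_mul] at hk
    simp only [Nat.even_iff] at hk
    simp only [Finset.mem_range]
    omega
  · intro j hj
    simp only [Finset.mem_range] at hj
    simp only [Finset.mem_filter, Finset.mem_range, hfdef, Fin.forall_fin_two,
      Evec_apply0, Evec_apply1, Nat.even_mul]
    simp only [Nat.even_iff]
    exact ⟨by omega, by omega⟩
  · intro k hk
    simp only [Finset.mem_filter, Finset.mem_range, hfdef, Fin.forall_fin_two,
      Evec_apply0, Evec_apply1, Nat.even_mul] at hk
    simp only [Nat.even_iff] at hk
    show 2 * (k / 2) + 1 = k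
    omega
  · intro j hj
    show (2 * j + 1) / 2 = j
    omega
  · intro k hk
    simp only [Finset.mem_filter, Finset.mem_range, hfdef, Fin.forall_fin_two,
      Evec_apply0, Evec_apply1, Nat.even_mul] at hk
    simp only [Nat.even_iff] at hk
    rw [(by omega : 2 * (k / 2) + 1 = k)]
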